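/- arXiv:1706.03300 — 3 statements merged into one kernel-verified Lean document; each statement's English description precedes it below -/
import Mathlib

section
/- Let n = 3 and for 0 ≤ a < 1 set V_a := 1 − V^a with V^a := (1/(n−1)!) · Σ_{(i,k) ∈ ℤ², 2 ≤ i ≤ n, max(i·a, i−n+1) ≤ k ≤ i−1} (−1)^{n+i} · C(n,i) · (k − i·a)^{n−1}. Then V_a = 3a − 3a² for 0 ≤ a ≤ 1/3; V_a = (1 + 3a²)/2 for 1/3 ≤ a ≤ 1/2; V_a = −1 + 6a − (9/2)a² for 1/2 ≤ a ≤ 2/3; and V_a = 1 for 2/3 ≤ a < 1. -/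
open Finset

/-- `V^a = (1/(n−1)!) · Σ_{(i,k) ∈ ℤ², 2 ≤ i ≤ n, max(i·a, i−n+1) ≤ k ≤ i−1}
(−1)^{n+i} C(n,i) (k − i·a)^{n−1}`. -/
noncomputable def Vexp (n : ℕ) (a : ℝ) : ℝ :=
  (1 / ((n - 1).factorial : ℝ)) *
    ∑ i ∈ Finset.Icc (2 : ℤ) (n : ℤ),
      ∑ k ∈ (Finset.Icc (i - (n : ℤ) + 1) (i - 1)).filter (fun k : ℤ => (i : ℝ) * a ≤ (k : ℝ)),
        (-1 : ℝ) ^ ((n : ℤ) + i) * (n.choose i.toNat : ℝ) * ((k : ℝ) - (i : ℝ) * a) ^ (n - 1)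

lemma Vexp3_eval (a : ℝ) : Vexp 3 a =
    (1/2) * ((if (2:ℝ)*a ≤ 0 then -3*((0:ℝ)-2*a)^2 else 0)
      + (if (2:ℝ)*a ≤ 1 then -3*((1:ℝ)-2*a)^2 else 0)
      + (if (3:ℝ)*a ≤ 1 then ((1:ℝ)-3*a)^2 else 0)
      + (if (3:ℝ)*a ≤ 2 then ((2:ℝ)-3*a)^2 else 0)) := by
  have h0 : ((3:ℕ):ℤ) = 3 := rfl
  have h1 : Finset.Icc (2:ℤ) 3 = {2, 3} := rfl
  rw [Vexp, h0, h1]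
  simp only [Finset.sum_filter, Finset.sum_insert, Finset.mem_singleton, Finset.sum_singleton,
    show ¬(2:ℤ)=3 by decide, not_false_iff,
    show (2:ℤ)-3+1 = 0 from rfl, show (2:ℤ)-1 = 1 from rfl,
    show (3:ℤ)-3+1 = 1 from rfl, show (3:ℤ)-1 = 2 from rfl,
    show Finset.Icc (0:ℤ) 1 = {0,1} from rfl, show Finset.Icc (1:ℤ) 2 = {1,2} from rfl]
  norm_num [show Nat.choose 3 (Int.toNat 2) = 3 from rfl, show Nat.choose 3 (Int.toNat 3) = 1 from rfl]
  ring_nf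

/-- for `n = 3` and `V_a := 1 − V^a`: `V_a = 3a − 3a²` on `[0,1/3]`,
`V_a = (1+3a²)/2` on `[1/3,1/2]`, `V_a = −1 + 6a − (9/2)a²` on `[1/2,2/3]`, and
`V_a = 1` on `[2/3,1)`. -/
theorem statement11 (a : ℝ) (ha0 : 0 ≤ a) (ha1 : a < 1) :
    (a ≤ 1 / 3 → 1 - Vexp 3 a = 3 * a - 3 * a ^ 2) ∧
    (1 / 3 ≤ a → a ≤ 1 / 2 → 1 - Vexp 3 a = (1 + 3 * a ^ 2) / 2) ∧
    (1 / 2 ≤ a → a ≤ 2 / 3 → 1 - Vexp 3 a = -1 + 6 * a - 9 / 2 * a ^ 2) ∧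
    (2 / 3 ≤ a → 1 - Vexp 3 a = 1) := by
  rw [Vexp3_eval]
  refine ⟨fun h => ?_, fun h1 h2 => ?_, fun h1 h2 => ?_, fun h => ?_⟩
  · rcases eq_or_lt_of_le ha0 with h0 | h0
    · rw [if_pos (by linarith), if_pos (by linarith), if_pos (by linarith),
        if_pos (by linarith)]
      nlinarith [h0]
    · rw [if_neg (by linarith), if_pos (by linarith), if_pos (by linarith),
        if_pos (by linarith)]
      ring
  · rcases eq_or_lt_of_le h1 with h0 | h0
    · rw [if_neg (by linarith), if_pos (by linarith), if_pos (by linarith),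
        if_pos (by linarith)]
      nlinarith [h0]
    · rw [if_neg (by linarith), if_pos (by linarith), if_neg (by linarith),
        if_pos (by linarith)]
      ring
  · rcases eq_or_lt_of_le h1 with h0 | h0
    · rw [if_neg (by linarith), if_pos (by linarith), if_neg (by linarith),
        if_pos (by linarith)]
      nlinarith [h0]
    · rw [if_neg (by linarith), if_neg (by linarith), if_neg (by linarith),
        if_pos (by linarith)]
      ring
  · rcases eq_or_lt_of_le h with h0 | h0
    · rw [if_neg (by linarith), if_neg (by linarith), if_neg (by linarith),
        if_pos (by linarith)]
      nlinarith [h0]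
    · rw [if_neg (by linarith), if_neg (by linarith), if_neg (by linarith),
        if_neg (by linarith)]
      ring
end

section
/- Let n = 4 and for 0 ≤ a < 1 set V_a := 1 − V^a with V^a := (1/(n−1)!) · Σ_{(i,k) ∈ ℤ², 2 ≤ i ≤ n, max(i·a, i−n+1) ≤ k ≤ i−1} (−1)^{n+i} · C(n,i) · (k − i·a)^{n−1}. Then V_a = 4a³ − 6a² + 4a for 0 ≤ a ≤ 1/4; V_a = −(20/3)a³ + 2a² + 2a + 1/6 for 1/4 < a ≤ 1/3; V_a = (34/3)a³ − 16a² + 8a − 1/2 for 1/3 < a ≤ 1/2; V_a = −(22/3)a³ + 12a² − 6a + 11/6 for 1/2 < a ≤ 2/3; V_a = (32/3)a³ − 24a² + 18a − 7/2 for 2/3 < a ≤ 3/4; and V_a = 1 for 3/4 < a < 1. -/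
open Finset

lemma ite1 (c : Prop) [Decidable c] (x t : ℝ) :
    (if c then x * t else 0) = x * (if c then t else 0) := by split <;> simp

lemma ite2 (c : Prop) [Decidable c] (x t : ℝ) :
    (if c then -(x * t) else 0) = -(x * (if c then t else 0)) := by split <;> simp

lemma vexp4 (a : ℝ) : Vexp 4 a =
    (if 2*a ≤ -1 then (-1-2*a)^3 else 0) + (if 2*a ≤ 0 then (-(2*a))^3 else 0)
      + (if 2*a ≤ 1 then (1-2*a)^3 else 0)
    - (2/3) * ((if 3*a ≤ 0 then (-(3*a))^3 else 0) + (if 3*a ≤ 1 then (1-3*a)^3 else 0)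
      + (if 3*a ≤ 2 then (2-3*a)^3 else 0))
    + (1/6) * ((if 4*a ≤ 1 then (1-4*a)^3 else 0) + (if 4*a ≤ 2 then (2-4*a)^3 else 0)
      + (if 4*a ≤ 3 then (3-4*a)^3 else 0)) := by
  rw [Vexp]
  rw [show Finset.Icc (2:ℤ) ((4:ℕ):ℤ) = {2,3,4} from by decide]
  rw [Finset.sum_insert (by decide), Finset.sum_insert (by decide), Finset.sum_singleton]
  rw [show Finset.Icc ((2:ℤ) - (4:ℕ) + 1) (2-1) = {-1,0,1} from by decide]
  rw [show Finset.Icc ((3:ℤ) - (4:ℕ) + 1) (3-1) = {0,1,2} from by decide]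
  rw [show Finset.Icc ((4:ℤ) - (4:ℕ) + 1) (4-1) = {1,2,3} from by decide]
  simp only [Finset.sum_filter, Finset.sum_insert, Finset.sum_singleton, Finset.mem_insert,
    Finset.mem_singleton]
  norm_num
  norm_num [show ((2:ℤ)).toNat = 2 from rfl, show ((3:ℤ)).toNat = 3 from rfl, show ((4:ℤ)).toNat = 4 from rfl]
  simp only [show ((Nat.choose 4 2 : ℕ):ℝ) = 6 by rw [show Nat.choose 4 2 = 6 from rfl]; norm_num,
    show ((Nat.factorial 3 : ℕ):ℝ) = 6 by rw [show Nat.factorial 3 = 6 from rfl]; norm_num]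
  simp only [ite1, ite2]
  ring

/-- the piecewise polynomial expression of `V_a := 1 − V^a` for `n = 4`. -/
theorem statement12 (a : ℝ) (ha0 : 0 ≤ a) (ha1 : a < 1) :
    (a ≤ 1 / 4 → 1 - Vexp 4 a = 4 * a ^ 3 - 6 * a ^ 2 + 4 * a) ∧
    (1 / 4 < a → a ≤ 1 / 3 → 1 - Vexp 4 a = -(20 / 3) * a ^ 3 + 2 * a ^ 2 + 2 * a + 1 / 6) ∧
    (1 / 3 < a → a ≤ 1 / 2 → 1 - Vexp 4 a = 34 / 3 * a ^ 3 - 16 * a ^ 2 + 8 * a - 1 / 2) ∧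
    (1 / 2 < a → a ≤ 2 / 3 → 1 - Vexp 4 a = -(22 / 3) * a ^ 3 + 12 * a ^ 2 - 6 * a + 11 / 6) ∧
    (2 / 3 < a → a ≤ 3 / 4 → 1 - Vexp 4 a = 32 / 3 * a ^ 3 - 24 * a ^ 2 + 18 * a - 7 / 2) ∧
    (3 / 4 < a → 1 - Vexp 4 a = 1) := by
  have e2 : (if 2*a ≤ 0 then (-(2*a))^3 else 0) = 0 := by
    split_ifs with h
    · have : a = 0 := le_antisymm (by linarith) ha0
      simp [this]
    · rfl
  have e3 : (if 3*a ≤ 0 then (-(3*a))^3 else 0) = 0 := by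
    split_ifs with h
    · have : a = 0 := le_antisymm (by linarith) ha0
      simp [this]
    · rfl
  refine ⟨fun h => ?_, fun h h' => ?_, fun h h' => ?_, fun h h' => ?_, fun h h' => ?_,
    fun h => ?_⟩
  · rw [vexp4 a, e2, e3, if_neg (show ¬(2*a ≤ -1) by linarith),
      if_pos (show 2*a ≤ 1 by linarith), if_pos (show 3*a ≤ 1 by linarith),
      if_pos (show 3*a ≤ 2 by linarith), if_pos (show 4*a ≤ 1 by linarith),
      if_pos (show 4*a ≤ 2 by linarith), if_pos (show 4*a ≤ 3 by linarith)]
    ring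
  · rw [vexp4 a, e2, e3, if_neg (show ¬(2*a ≤ -1) by linarith),
      if_pos (show 2*a ≤ 1 by linarith), if_pos (show 3*a ≤ 1 by linarith),
      if_pos (show 3*a ≤ 2 by linarith), if_neg (show ¬(4*a ≤ 1) by linarith),
      if_pos (show 4*a ≤ 2 by linarith), if_pos (show 4*a ≤ 3 by linarith)]
    ring
  · rw [vexp4 a, e2, e3, if_neg (show ¬(2*a ≤ -1) by linarith),
      if_pos (show 2*a ≤ 1 by linarith), if_neg (show ¬(3*a ≤ 1) by linarith),
      if_pos (show 3*a ≤ 2 by linarith), if_neg (show ¬(4*a ≤ 1) by linarith),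
      if_pos (show 4*a ≤ 2 by linarith), if_pos (show 4*a ≤ 3 by linarith)]
    ring
  · rw [vexp4 a, e2, e3, if_neg (show ¬(2*a ≤ -1) by linarith),
      if_neg (show ¬(2*a ≤ 1) by linarith), if_neg (show ¬(3*a ≤ 1) by linarith),
      if_pos (show 3*a ≤ 2 by linarith), if_neg (show ¬(4*a ≤ 1) by linarith),
      if_neg (show ¬(4*a ≤ 2) by linarith), if_pos (show 4*a ≤ 3 by linarith)]
    ring
  · rw [vexp4 a, e2, e3, if_neg (show ¬(2*a ≤ -1) by linarith),
      if_neg (show ¬(2*a ≤ 1) by linarith), if_neg (show ¬(3*a ≤ 1) by linarith),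
      if_neg (show ¬(3*a ≤ 2) by linarith), if_neg (show ¬(4*a ≤ 1) by linarith),
      if_neg (show ¬(4*a ≤ 2) by linarith), if_pos (show 4*a ≤ 3 by linarith)]
    ring
  · rw [vexp4 a, e2, e3, if_neg (show ¬(2*a ≤ -1) by linarith),
      if_neg (show ¬(2*a ≤ 1) by linarith), if_neg (show ¬(3*a ≤ 1) by linarith),
      if_neg (show ¬(3*a ≤ 2) by linarith), if_neg (show ¬(4*a ≤ 1) by linarith),
      if_neg (show ¬(4*a ≤ 2) by linarith), if_neg (show ¬(4*a ≤ 3) by linarith)]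
    ring
end

section
/- For every integer n ≥ 2, the function a ↦ V^a, defined for 0 ≤ a < 1 by V^a := (1/(n−1)!) · Σ_{(i,k) ∈ ℤ², 2 ≤ i ≤ n, max(i·a, i−n+1) ≤ k ≤ i−1} (−1)^{n+i} · C(n,i) · (k − i·a)^{n−1}, has right derivative equal to −n at a = 0. -/
open Finset

section Aux
open Function fwdDiff

lemma fwdDiff_pow (m : ℕ) :
    Δ_[(1:ℤ)] (fun x : ℤ => x ^ m) = ∑ j ∈ range m, fun x : ℤ => (m.choose j : ℤ) * x ^ j := by
  ext x
  simp only [fwdDiff, Finset.sum_apply]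
  rw [add_pow, sum_range_succ]
  simp [mul_comm]

lemma fd_pow_lt : ∀ n m : ℕ, m < n → (Δ_[(1:ℤ)])^[n] (fun x : ℤ => x ^ m) = fun _ => 0 := by
  intro n
  induction n with
  | zero => omega
  | succ n IH =>
    intro m hm
    rw [Function.iterate_succ_apply, fwdDiff_pow]
    have : ∀ j ∈ range m, (Δ_[(1:ℤ)])^[n] (fun x : ℤ => (m.choose j : ℤ) * x ^ j)
        = fun _ => 0 := by
      intro j hj
      have := IH j (by simp at hj; omega)
      have h2 : (fun x : ℤ => (m.choose j : ℤ) * x ^ j)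
          = (m.choose j : ℤ) • (fun x : ℤ => x ^ j) := by ext x; simp [mul_comm]
      rw [h2, fwdDiff_iter_const_smul, this]
      ext x; simp
    rw [fwdDiff_iter_finset_sum]
    rw [Finset.sum_congr rfl this]
    ext x
    simp

lemma fd_pow_eq (n : ℕ) : (Δ_[(1:ℤ)])^[n] (fun x : ℤ => x ^ n) = fun _ => (n.factorial : ℤ) := by
  induction n with
  | zero => simp
  | succ n IH =>
    rw [Function.iterate_succ_apply, fwdDiff_pow, sum_range_succ, fwdDiff_iter_add,
      fwdDiff_iter_finset_sum]
    have h1 : ∀ j ∈ range n, (Δ_[(1:ℤ)])^[n] (fun x : ℤ => ((n+1).choose j : ℤ) * x ^ j)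
        = fun _ => 0 := by
      intro j hj
      have h2 : (fun x : ℤ => ((n+1).choose j : ℤ) * x ^ j)
          = ((n+1).choose j : ℤ) • (fun x : ℤ => x ^ j) := by ext x; simp [mul_comm]
      rw [h2, fwdDiff_iter_const_smul, fd_pow_lt n j (by simpa using hj)]
      ext x; simp
    have h2 : (fun x : ℤ => ((n+1).choose n : ℤ) * x ^ n)
        = ((n+1).choose n : ℤ) • (fun x : ℤ => x ^ n) := by ext x; simp [mul_comm]
    rw [Finset.sum_congr rfl h1, h2, fwdDiff_iter_const_smul, IH]
    ext x
    simp only [Pi.add_apply, Pi.smul_apply, Finset.sum_apply, Pi.zero_apply, sum_const_zero,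
      Nat.choose_succ_self_right, smul_eq_mul, zero_add, Nat.factorial_succ]
    push_cast
    ring

lemma L2 (M : ℕ) :
    ∑ k ∈ range (M+1), (-1:ℤ)^(M-k) * (M.choose k) * (1+(k:ℤ))^M = M.factorial := by
  have h := fwdDiff_iter_eq_sum_shift (1:ℤ) (fun x : ℤ => x ^ M) M 1
  rw [fd_pow_eq] at h
  simp only [smul_eq_mul, nsmul_eq_mul, mul_one] at h
  rw [h]

lemma L3 (N : ℕ) : ∀ m : ℕ, ∑ j ∈ range (m+1), (-1:ℤ)^j * ((N+1).choose j) = (-1)^m * (N.choose m) := by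
  intro m
  induction m with
  | zero => simp
  | succ m IH =>
    rw [sum_range_succ, IH, Nat.choose_succ_succ' N m]
    push_cast
    ring

lemma L4 (n k : ℕ) (h2 : 2 ≤ n) (hk1 : 1 ≤ k) (hk : k ≤ n-1) :
    ∑ j ∈ Icc k (n-1), (-1:ℤ)^j * ((n-1).choose j) = (-1)^k * ((n-2).choose (k-1)) := by
  have h0 : ∑ j ∈ range n, (-1:ℤ)^j * ((n-1).choose j) = 0 := by
    have := Int.alternating_sum_range_choose_of_ne (n := n-1) (by omega)
    rw [show n = (n-1)+1 by omega]
    simpa using this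
  have hsplit : range n = range k ∪ Icc k (n-1) := by
    ext j; simp [Finset.mem_range, Finset.mem_Icc, Finset.mem_union]; omega
  have hdisj : Disjoint (range k) (Icc k (n-1)) := by
    simp [Finset.disjoint_left]; omega
  rw [hsplit, Finset.sum_union hdisj] at h0
  have hhead : ∑ j ∈ range k, (-1:ℤ)^j * ((n-1).choose j)
      = (-1)^(k-1) * ((n-2).choose (k-1)) := by
    have := L3 (n-2) (k-1)
    rw [show k = (k-1)+1 by omega] at *
    rw [show n - 2 + 1 = n - 1 by omega] at this
    simpa using this
  have : (-1:ℤ)^(k-1) * ((n-2).choose (k-1)) + ∑ j ∈ Icc k (n-1), (-1:ℤ)^j * ((n-1).choose j) = 0 := by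
    rw [← hhead]; exact h0
  have hk' : (-1:ℤ)^k = -(-1:ℤ)^(k-1) := by
    rw [show k = (k-1)+1 by omega]; ring_nf; simp [pow_succ]
  rw [hk']
  linarith [this]

lemma Tlemma (n : ℕ) (hn : 2 ≤ n) :
    ∑ i ∈ Icc 2 n, ∑ k ∈ Icc 1 (i-1), (-1:ℤ)^(n+i) * (n.choose i) * i * (k:ℤ)^(n-2)
      = n * (n-2).factorial := by
  -- swap sums
  rw [Finset.sum_comm' (s' := fun k => Icc (k+1) n) (t' := Icc 1 (n-1))
    (by intro i k; simp only [mem_Icc]; omega)]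
  -- inner sum evaluation
  have hinner : ∀ k ∈ Icc 1 (n-1),
      ∑ i ∈ Icc (k+1) n, (-1:ℤ)^(n+i) * (n.choose i) * i * (k:ℤ)^(n-2)
        = (n:ℤ) * ((-1)^(n+1+k) * ((n-2).choose (k-1))) * (k:ℤ)^(n-2) := by
    intro k hk
    simp only [mem_Icc] at hk
    have hre : Icc (k+1) n = Finset.map (addRightEmbedding 1) (Icc k (n-1)) := by
      rw [Finset.map_add_right_Icc]
      congr 1
      omega
    rw [hre, Finset.sum_map]
    simp only [addRightEmbedding_apply]
    have hterm : ∀ j ∈ Icc k (n-1),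
        (-1:ℤ)^(n+(j+1)) * (n.choose (j+1)) * (↑(j+1)) * (k:ℤ)^(n-2)
          = ((n:ℤ) * ((-1)^(n+1) * (k:ℤ)^(n-2))) * ((-1)^j * ((n-1).choose j)) := by
      intro j hj
      have hch : ((n.choose (j+1) : ℤ)) * ((j:ℤ)+1) = (n:ℤ) * ((n-1).choose j) := by
        have := Nat.add_one_mul_choose_eq (n-1) j
        rw [show n - 1 + 1 = n by omega] at this
        exact_mod_cast congrArg (Nat.cast : ℕ → ℤ) this.symm
      push_cast
      rw [pow_add, pow_add, pow_add]
      linear_combination ((-1:ℤ)^n * (-1:ℤ)^j * (-1:ℤ) * (k:ℤ)^(n-2)) * hch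
    rw [Finset.sum_congr rfl hterm, ← Finset.mul_sum, L4 n k hn hk.1 hk.2]
    rw [pow_add]
    ring
  rw [Finset.sum_congr rfl hinner]
  -- reindex k = m+1
  have hre2 : Icc 1 (n-1) = Finset.map (addRightEmbedding 1) (range (n-1)) := by
    ext x
    simp only [Finset.mem_map, Finset.mem_range, Finset.mem_Icc, addRightEmbedding_apply]
    constructor
    · intro h; exact ⟨x-1, by omega, by omega⟩
    · rintro ⟨y, hy, rfl⟩; omega
  rw [hre2, Finset.sum_map]
  simp only [addRightEmbedding_apply]
  have := L2 (n-2)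
  rw [show n - 2 + 1 = n - 1 by omega] at this
  calc ∑ m ∈ range (n-1), (n:ℤ) * ((-1)^(n+1+(m+1)) * ((n-2).choose (m+1-1))) * (↑(m+1):ℤ)^(n-2)
      = (n:ℤ) * ∑ m ∈ range (n-1), (-1:ℤ)^(n-2-m) * ((n-2).choose m) * (1+(m:ℤ))^(n-2) := by
        rw [Finset.mul_sum]
        apply Finset.sum_congr rfl
        intro m hm
        simp only [mem_range] at hm
        have hsgn : (-1:ℤ)^(n+1+(m+1)) = (-1)^(n-2-m) := by
          rw [show n+1+(m+1) = (n-2-m) + 2*(m+2) by omega, pow_add, pow_mul]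
          simp
        simp only [Nat.add_sub_cancel]
        rw [hsgn]
        push_cast
        ring
    _ = (n:ℤ) * (n-2).factorial := by rw [this]

noncomputable def Gfun (n : ℕ) (a : ℝ) : ℝ :=
  (1 / ((n - 1).factorial : ℝ)) *
    ∑ i ∈ Finset.Icc 2 n, ∑ k ∈ Finset.Icc 1 (i-1),
      (-1 : ℝ) ^ (n + i) * (n.choose i : ℝ) * ((k : ℝ) - (i : ℝ) * a) ^ (n - 1)

lemma Vexp_eq (n : ℕ) (hn : 2 ≤ n) (a : ℝ) (ha : 0 ≤ a) (ha' : a < (n:ℝ)⁻¹) :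
    Vexp n a = Gfun n a := by
  have hn0 : (0:ℝ) < n := by positivity
  unfold Vexp Gfun
  congr 1
  rw [show Finset.Icc (2:ℤ) (n:ℤ) = Finset.map ⟨(Nat.cast : ℕ → ℤ), Nat.cast_injective⟩
      (Finset.Icc 2 n) by
    ext x
    simp only [Finset.mem_map, Finset.mem_Icc, Function.Embedding.coeFn_mk]
    constructor
    · intro h; exact ⟨x.toNat, by omega, by omega⟩
    · rintro ⟨y, hy, rfl⟩; exact_mod_cast hy]
  rw [Finset.sum_map]
  apply Finset.sum_congr rfl
  intro i hi
  simp only [Finset.mem_Icc] at hi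
  simp only [Function.Embedding.coeFn_mk]
  -- step a : drop the filter
  have hstep : ∀ s : Finset ℤ, s = Finset.Icc (1:ℤ) ((i:ℤ)-1) →
    ∑ k ∈ (Finset.Icc ((i:ℤ) - (n : ℤ) + 1) ((i:ℤ) - 1)).filter
        (fun k : ℤ => ((i:ℤ) : ℝ) * a ≤ (k : ℝ)),
        (-1 : ℝ) ^ ((n : ℤ) + (i:ℤ)) * (n.choose ((i:ℤ)).toNat : ℝ) * ((k : ℝ) - ((i:ℤ) : ℝ) * a) ^ (n - 1)
      = ∑ k ∈ s,
        (-1 : ℝ) ^ ((n : ℤ) + (i:ℤ)) * (n.choose ((i:ℤ)).toNat : ℝ) * ((k : ℝ) - ((i:ℤ) : ℝ) * a) ^ (n - 1) := by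
    rintro s rfl
    apply (Finset.sum_subset ?_ ?_).symm
    · intro k hk
      simp only [Finset.mem_Icc] at hk
      simp only [Finset.mem_filter, Finset.mem_Icc]
      have hia : ((i:ℤ):ℝ) * a < 1 := by
        calc ((i:ℤ):ℝ) * a ≤ (n:ℝ) * a := by
              apply mul_le_mul_of_nonneg_right _ ha
              exact_mod_cast hi.2
          _ < (n:ℝ) * (n:ℝ)⁻¹ := by exact mul_lt_mul_of_pos_left ha' hn0
          _ = 1 := by field_simp
      refine ⟨⟨by omega, hk.2⟩, le_of_lt ?_⟩
      calc ((i:ℤ):ℝ) * a < 1 := hia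
        _ ≤ (k:ℝ) := by exact_mod_cast hk.1
    · intro k hk hk'
      simp only [Finset.mem_filter, Finset.mem_Icc] at hk hk'
      have hk0 : k ≤ 0 := by omega
      have h1 : (0:ℝ) ≤ ((i:ℤ):ℝ) * a := by positivity
      have h2 : (k:ℝ) = ((i:ℤ):ℝ) * a := by
        have : (k:ℝ) ≤ 0 := by exact_mod_cast hk0
        linarith [hk.2]
      rw [h2, sub_self, zero_pow (by omega), mul_zero]
  rw [hstep _ rfl]
  -- step b : inner reindex
  rw [show Finset.Icc (1:ℤ) ((i:ℤ)-1) = Finset.map ⟨(Nat.cast : ℕ → ℤ), Nat.cast_injective⟩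
      (Finset.Icc 1 (i-1)) by
    ext x
    simp only [Finset.mem_map, Finset.mem_Icc, Function.Embedding.coeFn_mk]
    constructor
    · intro h; exact ⟨x.toNat, by omega, by omega⟩
    · rintro ⟨y, hy, rfl⟩; constructor <;> [exact_mod_cast hy.1; exact_mod_cast (by omega : (y:ℤ) ≤ (i:ℤ)-1)]]
  rw [Finset.sum_map]
  apply Finset.sum_congr rfl
  intro k hk
  simp only [Function.Embedding.coeFn_mk, Int.toNat_natCast, Int.cast_natCast]
  rw [show (n:ℤ) + (i:ℤ) = ((n+i : ℕ) : ℤ) by push_cast; ring, zpow_natCast]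

lemma hasDerivAt_Gfun (n : ℕ) (hn : 2 ≤ n) : HasDerivAt (fun a => Gfun n a) (-(n:ℝ)) 0 := by
  have hterm : ∀ i k : ℕ,
      HasDerivAt (fun a : ℝ => (-1:ℝ)^(n+i) * (n.choose i : ℝ) * ((k:ℝ) - (i:ℝ)*a)^(n-1))
        ((-1:ℝ)^(n+i) * (n.choose i : ℝ) * (((n-1:ℕ):ℝ) * (k:ℝ)^(n-2) * (-(i:ℝ)))) 0 := by
    intro i k
    have h1 : HasDerivAt (fun a : ℝ => (k:ℝ) - (i:ℝ)*a) (-(i:ℝ)) 0 := by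
      exact (((hasDerivAt_id (0:ℝ)).const_mul (i:ℝ)).const_sub (k:ℝ)).congr_deriv (by simp)
    have h2 := h1.pow (n-1)
    simp only [mul_zero, sub_zero] at h2
    have h3 := h2.const_mul ((-1:ℝ)^(n+i) * (n.choose i : ℝ))
    refine h3.congr_deriv ?_
    rw [show n - 1 - 1 = n - 2 by omega]
  have hsum : HasDerivAt
      (fun a : ℝ => ∑ i ∈ Icc 2 n, ∑ k ∈ Icc 1 (i-1),
        (-1:ℝ)^(n+i) * (n.choose i : ℝ) * ((k:ℝ) - (i:ℝ)*a)^(n-1))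
      (∑ i ∈ Icc 2 n, ∑ k ∈ Icc 1 (i-1),
        (-1:ℝ)^(n+i) * (n.choose i : ℝ) * (((n-1:ℕ):ℝ) * (k:ℝ)^(n-2) * (-(i:ℝ)))) 0 := by
    apply HasDerivAt.fun_sum
    intro i _
    apply HasDerivAt.fun_sum
    intro k _
    exact hterm i k
  have hD := hsum.const_mul (1/((n-1).factorial:ℝ))
  have hcast : (∑ i ∈ Icc 2 n, ∑ k ∈ Icc 1 (i-1),
        (-1:ℝ)^(n+i) * (n.choose i : ℝ) * (((n-1:ℕ):ℝ) * (k:ℝ)^(n-2) * (-(i:ℝ))))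
      = -((n-1:ℕ):ℝ) * ((n:ℝ) * ((n-2).factorial : ℝ)) := by
    calc (∑ i ∈ Icc 2 n, ∑ k ∈ Icc 1 (i-1),
          (-1:ℝ)^(n+i) * (n.choose i : ℝ) * (((n-1:ℕ):ℝ) * (k:ℝ)^(n-2) * (-(i:ℝ))))
        = ∑ i ∈ Icc 2 n, ∑ k ∈ Icc 1 (i-1),
          (-((n-1:ℕ):ℝ)) * (((-1:ℤ)^(n+i) * (n.choose i) * i * (k:ℤ)^(n-2) : ℤ) : ℝ) := by
          apply sum_congr rfl; intro i _; apply sum_congr rfl; intro k _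
          push_cast; ring
      _ = (-((n-1:ℕ):ℝ)) * (((∑ i ∈ Icc 2 n, ∑ k ∈ Icc 1 (i-1),
            ((-1:ℤ)^(n+i) * (n.choose i) * i * (k:ℤ)^(n-2))) : ℤ) : ℝ) := by
          push_cast
          simp [Finset.mul_sum]
      _ = -((n-1:ℕ):ℝ) * ((n:ℝ) * ((n-2).factorial : ℝ)) := by
          rw [Tlemma n hn]; push_cast; ring
  have hfact : ((n-1).factorial : ℝ) = ((n-1:ℕ):ℝ) * ((n-2).factorial : ℝ) := by
    rw [show n-1 = (n-2)+1 by omega, Nat.factorial_succ, show (n-2)+1 = n-1 by omega]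
    push_cast; ring
  have hval : (1/((n-1).factorial:ℝ)) * (∑ i ∈ Icc 2 n, ∑ k ∈ Icc 1 (i-1),
        (-1:ℝ)^(n+i) * (n.choose i : ℝ) * (((n-1:ℕ):ℝ) * (k:ℝ)^(n-2) * (-(i:ℝ)))) = -(n:ℝ) := by
    rw [hcast, hfact]
    have h1 : ((n-1:ℕ):ℝ) ≠ 0 := by
      have : 1 ≤ n-1 := by omega
      positivity
    have h2 : ((n-2).factorial : ℝ) ≠ 0 := by positivity
    have key : ∀ x y : ℝ, x ≠ 0 → y ≠ 0 → 1/(x*y) * (-x * ((n:ℝ)*y)) = -(n:ℝ) := by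
      intro x y hx hy; field_simp
    exact key _ _ h1 h2
  rw [← hval]
  exact hD.congr_deriv (by ring)

end Aux

/-- for every `n ≥ 2`, the function `a ↦ V^a` (on `[0,1)`) has right
derivative `−n` at `a = 0`. -/
theorem statement13 (n : ℕ) (hn : 2 ≤ n) :
    HasDerivWithinAt (fun a : ℝ => Vexp n a) (-(n : ℝ)) (Set.Ico (0 : ℝ) 1) 0 := by
  have hnpos : (0:ℝ) < n := by
    have : 0 < n := by omega
    exact_mod_cast this
  have hpos : (0:ℝ) < (n:ℝ)⁻¹ := inv_pos.mpr hnpos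
  have hd := (hasDerivAt_Gfun n hn).hasDerivWithinAt (s := Set.Ico (0:ℝ) 1)
  apply hd.congr_of_eventuallyEq
  · have hmem : Set.Iio ((n:ℝ)⁻¹) ∈ nhdsWithin (0:ℝ) (Set.Ico (0:ℝ) 1) :=
      nhdsWithin_le_nhds (Iio_mem_nhds hpos)
    filter_upwards [self_mem_nhdsWithin, hmem] with a ha hb
    exact Vexp_eq n hn a ha.1 hb
  · exact Vexp_eq n hn 0 le_rfl hpos
end
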